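/- For every positive integer n, every set S of permutations of [n] = {1,…,n} such that any two distinct permutations in S are locally disjoint satisfies 6^{⌊n/3⌋} · |S| ≤ n!. -/

import Mathlib

/-- Two permutations `σ` and `τ` of `[n]` are *locally disjoint* if there exist
distinct elements `a, b` with `σ⁻¹(a) < σ⁻¹(b) < τ⁻¹(a) < τ⁻¹(b)` or
`τ⁻¹(a) < τ⁻¹(b) < σ⁻¹(a) < σ⁻¹(b)`. -/
def LocallyDisjoint {n : ℕ} (σ τ : Equiv.Perm (Fin n)) : Prop :=
  ∃ a b : Fin n, a ≠ b ∧
    ((σ⁻¹ a < σ⁻¹ b ∧ σ⁻¹ b < τ⁻¹ a ∧ τ⁻¹ a < τ⁻¹ b) ∨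
     (τ⁻¹ a < τ⁻¹ b ∧ τ⁻¹ b < σ⁻¹ a ∧ σ⁻¹ a < σ⁻¹ b))

/-- Any set of pairwise locally disjoint permutations of `[n]` has size at most
`n! / 6 ^ ⌊n/3⌋`. -/
theorem card_pairwise_locallyDisjoint_le (n : ℕ) (hn : 0 < n)
    (S : Finset (Equiv.Perm (Fin n)))
    (hS : ∀ σ ∈ S, ∀ τ ∈ S, σ ≠ τ → LocallyDisjoint σ τ) :
    6 ^ (n / 3) * S.card ≤ Nat.factorial n := by
  classical
  set m := n / 3 with hm
  have h3m : 3 * m ≤ n := by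
    have := Nat.div_mul_le_self n 3
    omega
  -- Embedding of blocks into positions
  have hlt : ∀ (i : Fin m) (j : Fin 3), 3 * i.val + j.val < n := by
    intro i j
    have hi := i.isLt
    have hj := j.isLt
    omega
  let ι : Fin m × Fin 3 ↪ Fin n :=
    ⟨fun p => ⟨3 * p.1.val + p.2.val, hlt p.1 p.2⟩, by
      rintro ⟨i, j⟩ ⟨i', j'⟩ h
      have h' : 3 * i.val + j.val = 3 * i'.val + j'.val := congrArg Fin.val h
      have hj := j.isLt; have hj' := j'.isLt
      have : i.val = i'.val ∧ j.val = j'.val := by omega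
      exact Prod.ext (Fin.ext this.1) (Fin.ext this.2)⟩
  -- Block permutations
  let π : (Fin m → Equiv.Perm (Fin 3)) → Equiv.Perm (Fin n) := fun g =>
    Equiv.Perm.viaEmbedding (Equiv.prodShear (Equiv.refl (Fin m)) g) ι
  have hπ : ∀ g (p : Fin n), ((π g) p).val / 3 = p.val / 3 := by
    intro g p
    by_cases hp : p ∈ Set.range ι
    · obtain ⟨⟨i, j⟩, rfl⟩ := hp
      have := Equiv.Perm.viaEmbedding_apply (Equiv.prodShear (Equiv.refl (Fin m)) g) ι (i, j)
      show ((π g) (ι (i, j))).val / 3 = (ι (i, j)).val / 3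
      rw [show (π g) (ι (i,j)) = ι ((Equiv.prodShear (Equiv.refl (Fin m)) g) (i,j)) from this]
      show (3 * i.val + ((g i) j).val) / 3 = (3 * i.val + j.val) / 3
      have h1 := ((g i) j).isLt
      have h2 := j.isLt
      omega
    · rw [Equiv.Perm.viaEmbedding_apply_of_notMem _ _ _ hp]
  have hπinv : ∀ g (p : Fin n), ((π g)⁻¹ p).val / 3 = p.val / 3 := by
    intro g p
    have := hπ g ((π g)⁻¹ p)
    rw [show (π g) ((π g)⁻¹ p) = p from Equiv.apply_symm_apply _ _] at this
    exact this.symm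
  -- The injection
  let Φ : (Fin m → Equiv.Perm (Fin 3)) × {x // x ∈ S} → Equiv.Perm (Fin n) :=
    fun p => (p.2 : Equiv.Perm (Fin n)) * π p.1
  have hΦ : Function.Injective Φ := by
    rintro ⟨g, σ, hσ⟩ ⟨h, τ, hτ⟩ heq
    simp only [Φ] at heq
    -- same block positions
    have hblk : ∀ a : Fin n, (σ⁻¹ a).val / 3 = (τ⁻¹ a).val / 3 := by
      intro a
      have h1 : (σ * π g)⁻¹ a = (τ * π h)⁻¹ a := by rw [heq]
      rw [mul_inv_rev, mul_inv_rev] at h1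
      have h2 := hπinv g (σ⁻¹ a)
      have h3 := hπinv h (τ⁻¹ a)
      simp only [Equiv.Perm.mul_apply] at h1
      rw [h1] at h2
      omega
    have hστ : σ = τ := by
      by_contra hne
      obtain ⟨a, b, -, hcase⟩ := hS σ hσ τ hτ hne
      rcases hcase with ⟨h1, h2, h3⟩ | ⟨h1, h2, h3⟩
      · have e1 := hblk a
        have e2 := hblk b
        have := h1.trans (h2.trans h3)
        have v1 : (σ⁻¹ a).val < (σ⁻¹ b).val := h1
        have v2 : (σ⁻¹ b).val < (τ⁻¹ a).val := h2
        have v3 : (τ⁻¹ a).val < (τ⁻¹ b).val := h3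
        omega
      · have e1 := hblk a
        have e2 := hblk b
        have v1 : (τ⁻¹ a).val < (τ⁻¹ b).val := h1
        have v2 : (τ⁻¹ b).val < (σ⁻¹ a).val := h2
        have v3 : (σ⁻¹ a).val < (σ⁻¹ b).val := h3
        omega
    subst hστ
    have hπeq : π g = π h := mul_left_cancel heq
    have hg : g = h := by
      funext i
      ext j
      have := Equiv.Perm.viaEmbedding_apply (Equiv.prodShear (Equiv.refl (Fin m)) g) ι (i, j)
      have h2 := Equiv.Perm.viaEmbedding_apply (Equiv.prodShear (Equiv.refl (Fin m)) h) ι (i, j)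
      have h3 : ι ((Equiv.prodShear (Equiv.refl (Fin m)) g) (i, j))
          = ι ((Equiv.prodShear (Equiv.refl (Fin m)) h) (i, j)) := by
        rw [← this, ← h2]
        show (π g) _ = (π h) _
        rw [hπeq]
      have h4 := ι.injective h3
      have h5 : ((i : Fin m), (g i) j) = ((i : Fin m), (h i) j) := h4
      exact congrArg Fin.val (Prod.mk.injEq _ _ _ _ ▸ h5).2
    subst hg
    rfl
  have hcard := Fintype.card_le_of_injective Φ hΦ
  have hdom : Fintype.card ((Fin m → Equiv.Perm (Fin 3)) × {x // x ∈ S})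
      = 6 ^ m * S.card := by
    rw [Fintype.card_prod, Fintype.card_fun, Fintype.card_perm, Fintype.card_coe]
    norm_num [Nat.factorial]
  have hcod : Fintype.card (Equiv.Perm (Fin n)) = Nat.factorial n := by
    rw [Fintype.card_perm, Fintype.card_fin]
  rw [hdom, hcod] at hcard
  exact hcard
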